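/- Let p > 1, β > 0, c_max ≥ 0 and χ₁ ≥ 0 be real numbers, and let χ : ℝ → ℝ be a function satisfying 0 ≤ χ(c) ≤ χ₁ for all c ∈ [0, c_max]. Define φ(c) = exp(β²c²). If (p−1)χ₁² ≤ β²/(3p), c_max·χ₁ ≤ 1/(6p), and (8/(p−1))·β²·c_max² ≤ 1/(6p), then for every c ∈ [0, c_max] one has (4/(p−1))·(φ′(c))²/φ(c) + (p−1)·χ(c)²·φ(c) + χ(c)·φ′(c) ≤ (1/(2p))·φ″(c). -/

import Mathlib

/-- The key differential inequality for the weight function `φ(c) = exp(β²c²)`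
used in the weighted `L^p` estimate of the cell density. -/
theorem weight_differential_inequality
    (p β cmax χ₁ : ℝ) (hp : 1 < p) (hβ : 0 < β) (hcmax : 0 ≤ cmax) (hχ₁ : 0 ≤ χ₁)
    (χ : ℝ → ℝ) (hχ : ∀ c ∈ Set.Icc (0:ℝ) cmax, 0 ≤ χ c ∧ χ c ≤ χ₁)
    (h1 : (p - 1) * χ₁ ^ 2 ≤ β ^ 2 / (3 * p))
    (h2 : cmax * χ₁ ≤ 1 / (6 * p))
    (h3 : 8 / (p - 1) * β ^ 2 * cmax ^ 2 ≤ 1 / (6 * p)) :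
    ∀ c ∈ Set.Icc (0:ℝ) cmax,
      4 / (p - 1) * (2 * β ^ 2 * c * Real.exp (β ^ 2 * c ^ 2)) ^ 2 / Real.exp (β ^ 2 * c ^ 2)
        + (p - 1) * χ c ^ 2 * Real.exp (β ^ 2 * c ^ 2)
        + χ c * (2 * β ^ 2 * c * Real.exp (β ^ 2 * c ^ 2))
        ≤ 1 / (2 * p) * ((2 * β ^ 2 + 4 * β ^ 4 * c ^ 2) * Real.exp (β ^ 2 * c ^ 2)) := by
  intro c hc
  obtain ⟨hc0, hcm⟩ := hc
  obtain ⟨hχ0, hχ1⟩ := hχ c ⟨hc0, hcm⟩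
  set E := Real.exp (β ^ 2 * c ^ 2) with hE
  have hEpos : 0 < E := hE ▸ Real.exp_pos _
  clear_value E
  have hp1 : 0 < p - 1 := by linarith
  have hppos : 0 < p := by linarith
  have hdiv : 4 / (p - 1) * (2 * β ^ 2 * c * E) ^ 2 / E
      = (16 / (p - 1) * β ^ 4 * c ^ 2) * E := by
    field_simp
    ring
  rw [hdiv]
  have hcore : 16 / (p - 1) * β ^ 4 * c ^ 2 + (p - 1) * χ c ^ 2 + χ c * (2 * β ^ 2 * c)
      ≤ 1 / (2 * p) * (2 * β ^ 2 + 4 * β ^ 4 * c ^ 2) := by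
    have hc2 : c ^ 2 ≤ cmax ^ 2 := by nlinarith
    -- term 1
    have t1 : 16 / (p - 1) * β ^ 4 * c ^ 2 ≤ β ^ 2 / (3 * p) := by
      have : 8 / (p - 1) * β ^ 2 * c ^ 2 ≤ 1 / (6 * p) := by
        refine le_trans ?_ h3
        have h8 : 0 ≤ 8 / (p - 1) * β ^ 2 := by positivity
        nlinarith
      calc 16 / (p - 1) * β ^ 4 * c ^ 2 = 2 * β ^ 2 * (8 / (p - 1) * β ^ 2 * c ^ 2) := by ring
        _ ≤ 2 * β ^ 2 * (1 / (6 * p)) := by nlinarith [sq_nonneg β]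
        _ = β ^ 2 / (3 * p) := by field_simp; ring
    -- term 2
    have t2 : (p - 1) * χ c ^ 2 ≤ β ^ 2 / (3 * p) := by
      refine le_trans ?_ h1
      exact mul_le_mul_of_nonneg_left (pow_le_pow_left₀ hχ0 hχ1 2) hp1.le
    -- term 3
    have t3 : χ c * (2 * β ^ 2 * c) ≤ β ^ 2 / (3 * p) := by
      have hcx : c * χ c ≤ 1 / (6 * p) := by
        exact le_trans (mul_le_mul hcm hχ1 hχ0 hcmax) h2
      have : 2 * β ^ 2 * (c * χ c) ≤ 2 * β ^ 2 * (1 / (6 * p)) := by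
        nlinarith [sq_nonneg β]
      calc χ c * (2 * β ^ 2 * c) = 2 * β ^ 2 * (c * χ c) := by ring
        _ ≤ 2 * β ^ 2 * (1 / (6 * p)) := this
        _ = β ^ 2 / (3 * p) := by field_simp; ring
    have hrhs : β ^ 2 / p ≤ 1 / (2 * p) * (2 * β ^ 2 + 4 * β ^ 4 * c ^ 2) := by
      have h0 : β ^ 2 / p = 1 / (2 * p) * (2 * β ^ 2) := by field_simp
      rw [h0]
      have hle : 2 * β ^ 2 ≤ 2 * β ^ 2 + 4 * β ^ 4 * c ^ 2 := le_add_of_nonneg_right (by positivity)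
      exact mul_le_mul_of_nonneg_left hle (by positivity)
    have : β ^ 2 / (3 * p) + β ^ 2 / (3 * p) + β ^ 2 / (3 * p) = β ^ 2 / p := by
      field_simp; ring
    linarith
  calc (16 / (p - 1) * β ^ 4 * c ^ 2) * E + (p - 1) * χ c ^ 2 * E + χ c * (2 * β ^ 2 * c * E)
      = (16 / (p - 1) * β ^ 4 * c ^ 2 + (p - 1) * χ c ^ 2 + χ c * (2 * β ^ 2 * c)) * E := by ring
    _ ≤ (1 / (2 * p) * (2 * β ^ 2 + 4 * β ^ 4 * c ^ 2)) * E := by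
        exact mul_le_mul_of_nonneg_right hcore hEpos.le
    _ = 1 / (2 * p) * ((2 * β ^ 2 + 4 * β ^ 4 * c ^ 2) * E) := by ring
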